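/- Let m be a positive integer, let n > 1 be a real number, and let E ⊆ ℝ^m be Ahlfors-regular of dimension n with constant C > 0. Let 1 ≤ q < n and let f ∈ L^q(E, H^n|_E). Then for every x ∈ E and every r > 0, the integral ∫_{{z ∈ E : |z−x| ≥ r}} |x−z|^{-(n-1)} |f(z)| dH^n(z) is finite. -/

import Mathlib

open MeasureTheory Metric
open scoped MeasureTheory

open scoped ENNReal

lemma annuli_lemma {α : Type*} [MeasurableSpace α] [MetricSpace α] [OpensMeasurableSpace α]
    (μ : Measure α) (x : α) (C n s r : ℝ) (hC : 0 ≤ C) (hs : n < s) (hr : 0 < r)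
    (hn : 0 < n) (hμ : ∀ t : ℝ, 0 < t → μ (closedBall x t) ≤ ENNReal.ofReal (C * t ^ n)) :
    ∫⁻ z in {z : α | r ≤ dist z x}, ENNReal.ofReal (dist x z ^ (-s)) ∂μ < ⊤ := by
  set A : ℕ → Set α := fun k => {z | 2 ^ k * r ≤ dist z x ∧ dist z x < 2 ^ (k + 1) * r} with hA
  have hAmeas : ∀ k, MeasurableSet (A k) := by
    intro k
    have hd : Measurable fun z : α => dist z x := (continuous_id.dist continuous_const).measurable
    exact (measurableSet_le measurable_const hd).inter (measurableSet_lt hd measurable_const)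
  have hcover : {z : α | r ≤ dist z x} ⊆ ⋃ k, A k := by
    intro z hz
    have hz' : (1 : ℝ) ≤ dist z x / r := (one_le_div hr).2 hz
    obtain ⟨k, h1, h2⟩ := exists_nat_pow_near hz' one_lt_two
    exact Set.mem_iUnion.2 ⟨k, (le_div_iff₀ hr).1 h1, (div_lt_iff₀ hr).1 h2⟩
  have key : ∀ k : ℕ, ∫⁻ z in A k, ENNReal.ofReal (dist x z ^ (-s)) ∂μ ≤
      ENNReal.ofReal ((2 ^ (n - s)) ^ k * (C * 2 ^ n * r ^ (n - s))) := by
    intro k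
    have hrk : (0 : ℝ) < 2 ^ k * r := by positivity
    have step1 : ∫⁻ z in A k, ENNReal.ofReal (dist x z ^ (-s)) ∂μ ≤
        ∫⁻ _ in A k, ENNReal.ofReal ((2 ^ k * r) ^ (-s)) ∂μ := by
      refine setLIntegral_mono measurable_const (fun z hz => ?_)
      refine ENNReal.ofReal_le_ofReal ?_
      rw [dist_comm]
      exact Real.rpow_le_rpow_of_nonpos hrk hz.1 (by linarith : -s ≤ 0)
    have step2 : ∫⁻ _ in A k, ENNReal.ofReal ((2 ^ k * r) ^ (-s)) ∂μ =
        ENNReal.ofReal ((2 ^ k * r) ^ (-s)) * μ (A k) := setLIntegral_const _ _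
    have step3 : μ (A k) ≤ ENNReal.ofReal (C * (2 ^ (k + 1) * r) ^ n) := by
      refine le_trans (measure_mono (fun z hz => ?_)) (hμ (2 ^ (k + 1) * r) (by positivity))
      exact mem_closedBall.2 hz.2.le
    calc ∫⁻ z in A k, ENNReal.ofReal (dist x z ^ (-s)) ∂μ
        ≤ ENNReal.ofReal ((2 ^ k * r) ^ (-s)) * μ (A k) := step1.trans_eq step2
      _ ≤ ENNReal.ofReal ((2 ^ k * r) ^ (-s)) * ENNReal.ofReal (C * (2 ^ (k + 1) * r) ^ n) :=
          mul_le_mul_right step3 _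
      _ = ENNReal.ofReal ((2 ^ k * r) ^ (-s) * (C * (2 ^ (k + 1) * r) ^ n)) :=
          (ENNReal.ofReal_mul (by positivity)).symm
      _ = ENNReal.ofReal ((2 ^ (n - s)) ^ k * (C * 2 ^ n * r ^ (n - s))) := by
          congr 1
          have h2 : (0:ℝ) ≤ 2 := by norm_num
          have hrr : (0:ℝ) ≤ r := hr.le
          have h2' : (0:ℝ) < 2 := two_pos
          rw [Real.mul_rpow (by positivity) hrr, Real.mul_rpow (by positivity) hrr,
            ← Real.rpow_natCast (2:ℝ) k, ← Real.rpow_natCast (2:ℝ) (k+1),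
            ← Real.rpow_natCast ((2:ℝ) ^ (n - s)) k,
            ← Real.rpow_mul h2, ← Real.rpow_mul h2, ← Real.rpow_mul h2]
          push_cast
          rw [show ((k:ℝ)+1)*n = (k:ℝ)*n + n by ring,
            show (n-s)*(k:ℝ) = (k:ℝ)*(-s) + (k:ℝ)*n by ring,
            show n - s = n + (-s) by ring,
            Real.rpow_add h2', Real.rpow_add h2', Real.rpow_add hr]
          ring
  have hsum : ∑' k : ℕ, ENNReal.ofReal ((2 ^ (n - s)) ^ k * (C * 2 ^ n * r ^ (n - s))) < ⊤ := by
    have hρ : (2:ℝ) ^ (n - s) < 1 := by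
      apply Real.rpow_lt_one_of_one_lt_of_neg one_lt_two (by linarith)
    have hρ0 : (0:ℝ) < 2 ^ (n - s) := Real.rpow_pos_of_pos two_pos _
    have heq : ∀ k : ℕ, ENNReal.ofReal ((2 ^ (n - s)) ^ k * (C * 2 ^ n * r ^ (n - s))) =
        ENNReal.ofReal (2 ^ (n - s)) ^ k * ENNReal.ofReal (C * 2 ^ n * r ^ (n - s)) := by
      intro k
      rw [ENNReal.ofReal_mul (by positivity), ENNReal.ofReal_pow hρ0.le]
    simp only [heq]
    rw [ENNReal.tsum_mul_right, ENNReal.tsum_geometric]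
    refine ENNReal.mul_lt_top ?_ ENNReal.ofReal_lt_top
    exact ENNReal.inv_lt_top.2 (tsub_pos_of_lt (ENNReal.ofReal_lt_one.2 hρ))
  calc ∫⁻ z in {z : α | r ≤ dist z x}, ENNReal.ofReal (dist x z ^ (-s)) ∂μ
      ≤ ∫⁻ z in ⋃ k, A k, ENNReal.ofReal (dist x z ^ (-s)) ∂μ := lintegral_mono_set hcover
    _ ≤ ∑' k, ∫⁻ z in A k, ENNReal.ofReal (dist x z ^ (-s)) ∂μ := lintegral_iUnion_le _ _
    _ ≤ ∑' k, ENNReal.ofReal ((2 ^ (n - s)) ^ k * (C * 2 ^ n * r ^ (n - s))) :=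
        ENNReal.tsum_le_tsum key
    _ < ⊤ := hsum

/-- If E ⊆ ℝ^m is Ahlfors-regular of dimension n > 1 (real) with constant C,
1 ≤ q < n, and f ∈ L^q(E, H^n|_E), then for every x ∈ E and every r > 0 the
integral ∫_{z ∈ E : |z−x| ≥ r} |x−z|^{-(n-1)} |f(z)| dH^n(z) is finite. -/
theorem stmt_19 (m : ℕ) (hm : 0 < m) (n : ℝ) (hn : 1 < n) (C : ℝ) (hC : 0 < C)
    (E : Set (EuclideanSpace ℝ (Fin m)))
    (hE_closed : IsClosed E) (hE_nontriv : E.Nontrivial)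
    (hE_reg : ∀ x ∈ E, ∀ t : ℝ, 0 < t → ENNReal.ofReal t ≤ EMetric.diam E →
      ENNReal.ofReal (C⁻¹ * t ^ n) ≤ μH[n] (E ∩ Metric.closedBall x t) ∧
        μH[n] (E ∩ Metric.closedBall x t) ≤ ENNReal.ofReal (C * t ^ n))
    (q : ℝ) (hq1 : 1 ≤ q) (hqn : q < n)
    (f : EuclideanSpace ℝ (Fin m) → ℝ)
    (hf : MemLp f (ENNReal.ofReal q) (μH[n].restrict E)) :
    ∀ x ∈ E, ∀ r : ℝ, 0 < r →
      ∫⁻ z in {z : EuclideanSpace ℝ (Fin m) | r ≤ dist z x},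
        ENNReal.ofReal (dist x z ^ (-(n - 1))) * (‖f z‖₊ : ENNReal)
          ∂(μH[n].restrict E) < ⊤ := by
  intro x hx r hr
  have hn0 : (0:ℝ) < n := by linarith
  have hd : Measurable fun z : EuclideanSpace ℝ (Fin m) => dist z x :=
    (continuous_id.dist continuous_const).measurable
  have hS : MeasurableSet {z : EuclideanSpace ℝ (Fin m) | r ≤ dist z x} :=
    measurableSet_le measurable_const hd
  -- measure growth bound
  have hμball : ∀ t : ℝ, 0 < t →
      (μH[n].restrict E) (closedBall x t) ≤ ENNReal.ofReal (C * t ^ n) := by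
    intro t ht
    rw [Measure.restrict_apply measurableSet_closedBall, Set.inter_comm]
    by_cases hcase : ENNReal.ofReal t ≤ EMetric.diam E
    · exact (hE_reg x hx t ht hcase).2
    · push_neg at hcase
      have hfin : EMetric.diam E ≠ ⊤ := (hcase.trans_le le_top).ne
      set d := (EMetric.diam E).toReal with hd_def
      have hdiam_pos : 0 < EMetric.diam E := by
        obtain ⟨a, ha, b, hb, hab⟩ := hE_nontriv
        exact lt_of_lt_of_le (by simpa using edist_pos.2 hab)
          (EMetric.edist_le_diam_of_mem ha hb)
      have hd_pos : 0 < d := ENNReal.toReal_pos hdiam_pos.ne' hfin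
      have hdt : d ≤ t := by
        have := ENNReal.toReal_mono (by simp) hcase.le
        rwa [ENNReal.toReal_ofReal ht.le] at this
      have hEsub : E ⊆ closedBall x d := by
        intro y hy
        have h1 : edist y x ≤ EMetric.diam E := EMetric.edist_le_diam_of_mem hy hx
        have h2 : dist y x ≤ d := by
          rw [dist_edist]
          exact ENNReal.toReal_mono hfin h1
        exact mem_closedBall.2 h2
      calc μH[n] (E ∩ closedBall x t) ≤ μH[n] (E ∩ closedBall x d) :=
            measure_mono fun z hz => ⟨hz.1, hEsub hz.1⟩
        _ ≤ ENNReal.ofReal (C * d ^ n) :=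
            (hE_reg x hx d hd_pos (by rw [ENNReal.ofReal_toReal hfin])).2
        _ ≤ ENNReal.ofReal (C * t ^ n) := ENNReal.ofReal_le_ofReal
            (mul_le_mul_of_nonneg_left (Real.rpow_le_rpow hd_pos.le hdt hn0.le) hC.le)
  rcases eq_or_lt_of_le hq1 with hq | hq
  · -- q = 1
    have hfin1 : ∫⁻ z, (‖f z‖₊ : ℝ≥0∞) ∂(μH[n].restrict E) < ⊤ := by
      have h2 := hf.2
      rw [← hq, ENNReal.ofReal_one, eLpNorm_one_eq_lintegral_enorm] at h2
      exact h2
    calc ∫⁻ z in {z : EuclideanSpace ℝ (Fin m) | r ≤ dist z x},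
          ENNReal.ofReal (dist x z ^ (-(n - 1))) * (‖f z‖₊ : ℝ≥0∞) ∂(μH[n].restrict E)
        ≤ ∫⁻ z in {z : EuclideanSpace ℝ (Fin m) | r ≤ dist z x},
          ENNReal.ofReal (r ^ (-(n - 1))) * (‖f z‖₊ : ℝ≥0∞) ∂(μH[n].restrict E) := by
          refine lintegral_mono_ae ((ae_restrict_iff' hS).2 (ae_of_all _ fun z hz => ?_))
          refine mul_le_mul_left (ENNReal.ofReal_le_ofReal ?_) _
          rw [dist_comm]
          exact Real.rpow_le_rpow_of_nonpos hr hz (by linarith)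
      _ = ENNReal.ofReal (r ^ (-(n - 1))) *
          ∫⁻ z in {z : EuclideanSpace ℝ (Fin m) | r ≤ dist z x}, (‖f z‖₊ : ℝ≥0∞)
            ∂(μH[n].restrict E) := lintegral_const_mul' _ _ ENNReal.ofReal_ne_top
      _ ≤ ENNReal.ofReal (r ^ (-(n - 1))) * ∫⁻ z, (‖f z‖₊ : ℝ≥0∞) ∂(μH[n].restrict E) :=
          mul_le_mul_right (setLIntegral_le_lintegral _ _) _
      _ < ⊤ := ENNReal.mul_lt_top ENNReal.ofReal_lt_top hfin1
  · -- 1 < q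
    set p := Real.conjExponent q with hp_def
    have hpq : p.HolderConjugate q := (Real.HolderConjugate.conjExponent hq).symm
    have hwm : Measurable fun z : EuclideanSpace ℝ (Fin m) =>
        ENNReal.ofReal (dist x z ^ (-(n - 1))) :=
      by fun_prop
    have hg : AEMeasurable (fun z : EuclideanSpace ℝ (Fin m) => (‖f z‖₊ : ℝ≥0∞))
        ((μH[n].restrict E).restrict {z : EuclideanSpace ℝ (Fin m) | r ≤ dist z x}) :=
      hf.1.enorm.restrict
    have H := ENNReal.lintegral_mul_le_Lp_mul_Lq
      ((μH[n].restrict E).restrict {z : EuclideanSpace ℝ (Fin m) | r ≤ dist z x})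
      hpq hwm.aemeasurable hg
    simp only [Pi.mul_apply] at H
    refine lt_of_le_of_lt H (ENNReal.mul_lt_top ?_ ?_)
    · -- weight factor
      refine ENNReal.rpow_lt_top_of_nonneg hpq.one_div_nonneg ?_
      have hpt : ∀ z : EuclideanSpace ℝ (Fin m),
          (ENNReal.ofReal (dist x z ^ (-(n - 1)))) ^ p =
            ENNReal.ofReal (dist x z ^ (-((n - 1) * p))) := by
        intro z
        rw [ENNReal.ofReal_rpow_of_nonneg (Real.rpow_nonneg dist_nonneg _) hpq.nonneg,
          ← Real.rpow_mul dist_nonneg, neg_mul]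
      simp only [hpt]
      have hsgt : n < (n - 1) * p := by
        have hq1' : (0:ℝ) < q - 1 := sub_pos.2 hq
        rw [hp_def, Real.conjExponent, mul_div_assoc', lt_div_iff₀ hq1']
        nlinarith
      exact (annuli_lemma (μH[n].restrict E) x C n ((n - 1) * p) r hC.le hsgt hr hn0 hμball).ne
    · -- f factor
      refine ENNReal.rpow_lt_top_of_nonneg hpq.symm.one_div_nonneg ?_
      have h2 := hf.2
      rw [eLpNorm_eq_lintegral_rpow_enorm_toReal
        (by simpa using (ENNReal.ofReal_pos.2 (by linarith : (0:ℝ) < q)).ne')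
        ENNReal.ofReal_ne_top, ENNReal.toReal_ofReal (by linarith : (0:ℝ) ≤ q)] at h2
      have h3 := (ENNReal.rpow_lt_top_iff_of_pos (by positivity : (0:ℝ) < 1 / q)).1 h2
      exact (lt_of_le_of_lt (setLIntegral_le_lintegral _ _) h3).ne
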